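/- arXiv:2406.09338 — 2 statements merged into one kernel-verified Lean document; each statement's English description precedes it below -/
import Mathlib

section
/- Let α be a finite type with card α = n ≥ 2, and let p, q : α → ℝ be probability vectors (p i ≥ 0, q i ≥ 0, Σ_i p i = Σ_i q i = 1). Define the entropy H(p) = Σ_i (−p i · log(p i)) (with the convention 0·log 0 = 0, i.e. using negMulLog). If Σ_i |p i − q i| ≤ δ for some δ with 0 ≤ δ ≤ 1/2, then |H(p) − H(q)| ≤ √(δ·n). -/
open Real Set

/-- Slope comparison for the concave function `negMulLog`. -/
lemma negMulLog_slope4 {x₁ y₁ x₂ y₂ : ℝ} (hx₁ : 0 ≤ x₁) (hx : x₁ ≤ x₂)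
    (h₁ : x₁ < y₁) (h₂ : x₂ < y₂) (hy : y₁ ≤ y₂) :
    (negMulLog y₂ - negMulLog x₂) / (y₂ - x₂) ≤ (negMulLog y₁ - negMulLog x₁) / (y₁ - x₁) := by
  have hconv : ConvexOn ℝ (Ici (0:ℝ)) (fun x => - negMulLog x) := concaveOn_negMulLog.neg
  have hx₂ : (0:ℝ) ≤ x₂ := hx₁.trans hx
  have hy₁ : (0:ℝ) ≤ y₁ := hx₁.trans h₁.le
  have hy₂ : (0:ℝ) ≤ y₂ := hx₂.trans h₂.le
  have h1 := hconv.secant_mono (a := x₁) (x := y₁) (y := y₂) hx₁ hy₁ hy₂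
    (by intro h; linarith) (by intro h; linarith) hy
  have h2 := hconv.secant_mono (a := y₂) (x := x₁) (y := x₂) hy₂ hx₁ hx₂
    (by intro h; linarith) (by intro h; linarith) hx
  have e1 : (-negMulLog x₁ - -negMulLog y₂) / (x₁ - y₂)
      = (-negMulLog y₂ - -negMulLog x₁) / (y₂ - x₁) := by
    rw [← neg_div_neg_eq]; ring_nf
  rw [e1] at h2
  have key := h1.trans h2
  have e2 : (-negMulLog y₁ - -negMulLog x₁) / (y₁ - x₁)
      = -((negMulLog y₁ - negMulLog x₁) / (y₁ - x₁)) := by ring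
  have e3 : (-negMulLog x₂ - -negMulLog y₂) / (x₂ - y₂)
      = -((negMulLog y₂ - negMulLog x₂) / (y₂ - x₂)) := by
    rw [show x₂ - y₂ = -(y₂ - x₂) from by ring, div_neg]; ring
  rw [e2, e3] at key
  linarith [key]

/-- `negMulLog (1-t) ≤ negMulLog t` for `t ∈ [0, 1/2]`. -/
lemma negMulLog_flip {t : ℝ} (h0 : 0 ≤ t) (h1 : t ≤ 1/2) :
    negMulLog (1 - t) ≤ negMulLog t := by
  set g : ℝ → ℝ := fun t => negMulLog t - negMulLog (1 - t) with hg
  have hconc : ConcaveOn ℝ (Icc (0:ℝ) (1/2)) g := by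
    apply concaveOn_of_hasDerivWithinAt2_nonpos (f' := fun t => -Real.log t - Real.log (1-t) - 2)
      (f'' := fun t => -t⁻¹ + (1-t)⁻¹) (convex_Icc _ _)
    · exact (continuous_negMulLog.sub
        (continuous_negMulLog.comp (continuous_const.sub continuous_id))).continuousOn
    · intro x hx
      rw [interior_Icc] at hx
      have hx0 : x ≠ 0 := ne_of_gt hx.1
      have hx1 : (1:ℝ) - x ≠ 0 := by have := hx.2; intro h; nlinarith [sub_eq_zero.mp h]
      have d1 : HasDerivAt negMulLog (-Real.log x - 1) x := hasDerivAt_negMulLog hx0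
      have d2 : HasDerivAt (fun t : ℝ => negMulLog (1 - t))
          ((-Real.log (1-x) - 1) * (-1)) x :=
        (hasDerivAt_negMulLog hx1).comp x ((hasDerivAt_id x).const_sub 1)
      have hder := d1.sub d2
      have heq : -Real.log x - 1 - (-Real.log (1-x) - 1) * (-1)
          = -Real.log x - Real.log (1-x) - 2 := by ring
      rw [heq] at hder
      exact hder.hasDerivWithinAt
    · intro x hx
      rw [interior_Icc] at hx
      have hx0 : x ≠ 0 := ne_of_gt hx.1
      have hx1 : (0:ℝ) < 1 - x := by have := hx.2; linarith
      have d1 : HasDerivAt (fun t : ℝ => -Real.log t) (-x⁻¹) x :=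
        (Real.hasDerivAt_log hx0).neg
      have d2 : HasDerivAt (fun t : ℝ => -Real.log (1 - t)) ((1-x)⁻¹) x := by
        have h := ((Real.hasDerivAt_log (ne_of_gt hx1)).comp x
          ((hasDerivAt_id x).const_sub 1)).neg
        exact h.congr_deriv (by ring)
      have hder := (d1.add d2).sub_const 2
      have heq : (fun t : ℝ => -Real.log t + -Real.log (1 - t) - 2)
          = fun t : ℝ => -Real.log t - Real.log (1-t) - 2 := by funext t; ring
      simp only [Pi.add_apply] at hder
      rw [heq] at hder
      exact hder.hasDerivWithinAt
    · intro x hx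
      rw [interior_Icc] at hx
      have hx0 : (0:ℝ) < x := hx.1
      have hx1 : x ≤ 1 - x := by have := hx.2; linarith
      have h2 : (1 - x)⁻¹ ≤ x⁻¹ := inv_anti₀ hx0 hx1
      linarith
  have hmem : t ∈ Icc (0:ℝ) (1/2) := ⟨h0, h1⟩
  have h00 : (0:ℝ) ∈ Icc (0:ℝ) (1/2) := by constructor <;> norm_num
  have h05 : (1/2:ℝ) ∈ Icc (0:ℝ) (1/2) := by constructor <;> norm_num
  have hmin := hconc.min_le_of_mem_Icc h00 h05 hmem
  have hg0 : g 0 = 0 := by simp [hg]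
  have hg5 : g (1/2) = 0 := by norm_num [hg]
  rw [hg0, hg5, min_self] at hmin
  have : 0 ≤ negMulLog t - negMulLog (1 - t) := hmin
  linarith

/-- Pointwise Fannes-type bound for `a ≤ b`. -/
lemma negMulLog_diff_le {a b : ℝ} (ha : 0 ≤ a) (hab : a ≤ b) (hb1 : b ≤ 1)
    (hd : b - a ≤ 1/2) :
    |negMulLog a - negMulLog b| ≤ negMulLog (b - a) := by
  rcases eq_or_lt_of_le hab with rfl | hlt
  · simp
  have ht0 : 0 < b - a := by linarith
  rw [abs_sub_le_iff]
  constructor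
  · -- via slope(1-(b-a), 1) ≤ slope(a, b)
    have hs := negMulLog_slope4 (x₁ := a) (y₁ := b) (x₂ := 1 - (b - a)) (y₂ := 1)
      ha (by linarith) hlt (by linarith) hb1
    rw [show (1:ℝ) - (1 - (b - a)) = b - a from by ring] at hs
    rw [div_le_div_iff₀ ht0 ht0] at hs
    have h2 : negMulLog 1 - negMulLog (1 - (b - a)) ≤ negMulLog b - negMulLog a := by
      nlinarith
    simp only [negMulLog_one] at h2
    have h3 := negMulLog_flip ht0.le hd
    linarith
  · -- via slope(a, b) ≤ slope(0, b-a)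
    have hs := negMulLog_slope4 (x₁ := 0) (y₁ := b - a) (x₂ := a) (y₂ := b)
      le_rfl ha ht0 hlt (by linarith)
    simp only [negMulLog_zero, sub_zero] at hs
    rw [div_le_div_iff₀ ht0 ht0] at hs
    nlinarith

/-- `negMulLog s ≤ √s` for `s ≥ 0`. -/
lemma negMulLog_le_sqrt {s : ℝ} (hs : 0 ≤ s) : negMulLog s ≤ Real.sqrt s := by
  rcases eq_or_lt_of_le hs with rfl | hs
  · simp
  set v := Real.sqrt s with hv
  have hv0 : 0 < v := Real.sqrt_pos.mpr hs
  have hvs : v * v = s := Real.mul_self_sqrt hs.le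
  have he : (2:ℝ) ≤ Real.exp 1 := by
    have := Real.add_one_le_exp (1:ℝ); linarith
  have hepos : (0:ℝ) < Real.exp 1 := Real.exp_pos 1
  have key : -(v * Real.log v) ≤ (Real.exp 1)⁻¹ := by
    have hpos : (0:ℝ) < (v * Real.exp 1)⁻¹ := by positivity
    have h := Real.log_le_sub_one_of_pos hpos
    rw [Real.log_inv, Real.log_mul (ne_of_gt hv0) (ne_of_gt hepos), Real.log_exp] at h
    have h2 : -Real.log v ≤ (v * Real.exp 1)⁻¹ := by linarith
    have h3 := mul_le_mul_of_nonneg_left h2 hv0.le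
    rwa [mul_inv, ← mul_assoc, mul_inv_cancel₀ (ne_of_gt hv0), one_mul, mul_neg] at h3
  have hinv : (Real.exp 1)⁻¹ ≤ 2⁻¹ := inv_anti₀ (by norm_num) he
  have hlog : Real.log s = Real.log v + Real.log v := by
    rw [← hvs, Real.log_mul (ne_of_gt hv0) (ne_of_gt hv0)]
  have heq : negMulLog s = 2 * v * (-(v * Real.log v)) := by
    have hdef : negMulLog s = -s * Real.log s := rfl
    rw [hdef, hlog, ← hvs]; ring
  rw [heq]
  calc 2 * v * (-(v * Real.log v)) ≤ 2 * v * (Real.exp 1)⁻¹ :=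
        mul_le_mul_of_nonneg_left key (by linarith)
    _ ≤ 2 * v * 2⁻¹ := mul_le_mul_of_nonneg_left hinv (by linarith)
    _ = v := by ring

/-- Fannes-type continuity of entropy (intermediate claim in the proof of Lemma 7):
an ℓ₁ error of δ ≤ 1/2 between two probability vectors on n ≥ 2 points yields an entropy
error of at most √(δ·n). -/
theorem stmt_8 {α : Type*} [Fintype α] (n : ℕ) (hcard : Fintype.card α = n) (hn : 2 ≤ n)
    (p q : α → ℝ) (hp0 : ∀ i, 0 ≤ p i) (hq0 : ∀ i, 0 ≤ q i)
    (hp1 : ∑ i, p i = 1) (hq1 : ∑ i, q i = 1)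
    (δ : ℝ) (hδ0 : 0 ≤ δ) (hδ1 : δ ≤ 1 / 2)
    (hdist : ∑ i, |p i - q i| ≤ δ) :
    |(∑ i, Real.negMulLog (p i)) - ∑ i, Real.negMulLog (q i)| ≤ Real.sqrt (δ * n) := by
  classical
  set t : α → ℝ := fun i => |p i - q i| with htdef
  have ht0 : ∀ i, 0 ≤ t i := fun i => abs_nonneg _
  set θ : ℝ := ∑ i, t i with hθdef
  have hθ0 : 0 ≤ θ := Finset.sum_nonneg fun i _ => ht0 i
  have hθδ : θ ≤ δ := hdist
  have hn0 : (0:ℝ) < (n:ℝ) := by exact_mod_cast Nat.lt_of_lt_of_le (by norm_num) hn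
  -- per-term bound
  have hterm : ∀ i, |negMulLog (p i) - negMulLog (q i)| ≤ negMulLog (t i) := by
    intro i
    have hpi1 : p i ≤ 1 := by
      rw [← hp1]
      exact Finset.single_le_sum (fun j _ => hp0 j) (Finset.mem_univ i)
    have hqi1 : q i ≤ 1 := by
      rw [← hq1]
      exact Finset.single_le_sum (fun j _ => hq0 j) (Finset.mem_univ i)
    have hti : t i ≤ 1/2 :=
      le_trans (le_trans (Finset.single_le_sum (fun j _ => ht0 j) (Finset.mem_univ i)) hθδ) hδ1
    rcases le_total (p i) (q i) with h | h
    · have hteq : t i = q i - p i := by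
        simp only [htdef]; rw [abs_sub_comm, abs_of_nonneg (by linarith)]
      rw [hteq]
      exact negMulLog_diff_le (hp0 i) h hqi1 (by rw [← hteq]; exact hti)
    · have hteq : t i = p i - q i := by
        simp only [htdef]; rw [abs_of_nonneg (by linarith)]
      rw [hteq, abs_sub_comm]
      exact negMulLog_diff_le (hq0 i) h hpi1 (by rw [← hteq]; exact hti)
  -- sum of per-term bounds
  have hsum1 : |(∑ i, negMulLog (p i)) - ∑ i, negMulLog (q i)| ≤ ∑ i, negMulLog (t i) := by
    rw [← Finset.sum_sub_distrib]
    exact le_trans (Finset.abs_sum_le_sum_abs _ _) (Finset.sum_le_sum fun i _ => hterm i)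
  -- Jensen
  have hJ : ∑ i, negMulLog (t i) ≤ (n:ℝ) * negMulLog (θ / n) := by
    have hjen := concaveOn_negMulLog.le_map_sum (t := Finset.univ)
      (w := fun _ : α => (n:ℝ)⁻¹) (p := t)
      (fun i _ => by positivity)
      (by simp [hcard, mul_inv_cancel₀ (ne_of_gt hn0)])
      (fun i _ => ht0 i)
    simp only [smul_eq_mul, ← Finset.mul_sum] at hjen
    rw [← hθdef] at hjen
    have := mul_le_mul_of_nonneg_left hjen hn0.le
    rw [← mul_assoc, mul_inv_cancel₀ (ne_of_gt hn0), one_mul] at this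
    rw [show θ / (n:ℝ) = (n:ℝ)⁻¹ * θ from by ring]
    exact this
  -- final bound
  have hfin : (n:ℝ) * negMulLog (θ / n) ≤ Real.sqrt (δ * n) := by
    have h1 : negMulLog (θ / n) ≤ Real.sqrt (θ / n) := negMulLog_le_sqrt (by positivity)
    have h2 : (n:ℝ) * negMulLog (θ / n) ≤ (n:ℝ) * Real.sqrt (θ / n) :=
      mul_le_mul_of_nonneg_left h1 hn0.le
    have h3 : (n:ℝ) * Real.sqrt (θ / n) = Real.sqrt (θ * n) := by
      rw [show θ * (n:ℝ) = (n:ℝ)^2 * (θ / n) from by field_simp,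
        Real.sqrt_mul (by positivity), Real.sqrt_sq hn0.le]
    have h4 : Real.sqrt (θ * n) ≤ Real.sqrt (δ * n) :=
      Real.sqrt_le_sqrt (by nlinarith)
    linarith
  linarith
end

section
/- Let A, B, C be finite nonempty types and p : B × C × A → ℝ a strictly positive probability mass function, with marginals p_{BC}, p_B, conditionals p(a|b), p(a|b,c), p(c|b) = p_{BC}(b,c)/p_B(b), and conditional entropies H(A|B), H(A|B,C) defined as usual. Then: (i) if p(a|b,c) = p(a|b) for all (a,b,c), then H(A|B,C) = H(A|B); and (ii) if there exist q > 0 and ε′ > 0 such that for every b there exists c with p(c|b) ≥ q and Σ_a |p(a|b,c) − p(a|b)| ≥ √ε′, then H(A|B) − H(A|B,C) ≥ (1/2)·q·ε′. -/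
/-- Marginal of `p` on the pair (B, C). -/
noncomputable def pBC {A B C : Type*} [Fintype A] (p : B × C × A → ℝ) (b : B) (c : C) : ℝ :=
  ∑ a, p (b, c, a)

/-- Marginal of `p` on B. -/
noncomputable def pB {A B C : Type*} [Fintype A] [Fintype C] (p : B × C × A → ℝ) (b : B) : ℝ :=
  ∑ c, ∑ a, p (b, c, a)

/-- Marginal of `p` on the pair (B, A). -/
noncomputable def pBA {A B C : Type*} [Fintype C] (p : B × C × A → ℝ) (b : B) (a : A) : ℝ :=
  ∑ c, p (b, c, a)

/-- Conditional probability p(a | b). -/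
noncomputable def condAgivenB {A B C : Type*} [Fintype A] [Fintype C]
    (p : B × C × A → ℝ) (b : B) (a : A) : ℝ :=
  pBA p b a / pB p b

/-- Conditional probability p(a | b, c). -/
noncomputable def condAgivenBC {A B C : Type*} [Fintype A]
    (p : B × C × A → ℝ) (b : B) (c : C) (a : A) : ℝ :=
  p (b, c, a) / pBC p b c

/-- Conditional probability p(c | b). -/
noncomputable def condCgivenB {A B C : Type*} [Fintype A] [Fintype C]
    (p : B × C × A → ℝ) (b : B) (c : C) : ℝ :=
  pBC p b c / pB p b

/-- Conditional entropy H(A | B). -/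
noncomputable def HAgivenB {A B C : Type*} [Fintype A] [Fintype B] [Fintype C]
    (p : B × C × A → ℝ) : ℝ :=
  -∑ b, ∑ a, pBA p b a * Real.log (condAgivenB p b a)

/-- Conditional entropy H(A | B, C). -/
noncomputable def HAgivenBC {A B C : Type*} [Fintype A] [Fintype B] [Fintype C]
    (p : B × C × A → ℝ) : ℝ :=
  -∑ b, ∑ c, ∑ a, p (b, c, a) * Real.log (condAgivenBC p b c a)

open Real Set Finset

lemma one_sub_inv_le_log' {t : ℝ} (ht : 0 < t) : 1 - t⁻¹ ≤ Real.log t := by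
  have h := Real.log_le_sub_one_of_pos (inv_pos.2 ht)
  rw [Real.log_inv] at h
  linarith

noncomputable def gfun : ℝ → ℝ := fun t => (t + 1) * Real.log t - 2 * (t - 1)

lemma gfun_hasDeriv {t : ℝ} (ht : 0 < t) :
    HasDerivAt gfun (Real.log t + (t + 1) * t⁻¹ - 2) t := by
  have h1 : HasDerivAt (fun t : ℝ => (t + 1) * Real.log t)
      (1 * Real.log t + (t + 1) * t⁻¹) t :=
    (((hasDerivAt_id t).add_const 1).mul (Real.hasDerivAt_log ht.ne'))
  have h2 : HasDerivAt (fun t : ℝ => 2 * (t - 1)) 2 t := by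
    simpa using ((hasDerivAt_id t).sub_const 1).const_mul 2
  have h := h1.sub h2
  rw [one_mul] at h
  exact h

lemma gfun_cont : ∀ x ∈ Set.Ioi (0:ℝ), ContinuousAt gfun x := fun x hx =>
  ((continuousAt_id.add continuousAt_const).mul
    (Real.continuousAt_log (ne_of_gt hx))).sub
    (continuousAt_const.mul (continuousAt_id.sub continuousAt_const))

lemma gfun_mono : MonotoneOn gfun (Set.Ioi (0:ℝ)) := by
  apply monotoneOn_of_deriv_nonneg (convex_Ioi 0)
    (fun x hx => (gfun_cont x hx).continuousWithinAt)
  · intro x hx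
    rw [interior_Ioi] at hx
    exact (gfun_hasDeriv hx).differentiableAt.differentiableWithinAt
  · intro x hx
    rw [interior_Ioi] at hx
    rw [(gfun_hasDeriv hx).deriv]
    have h := one_sub_inv_le_log' hx
    have hxne : x ≠ 0 := ne_of_gt hx
    have h2 : (x + 1) * x⁻¹ = 1 + x⁻¹ := by field_simp
    rw [h2]; linarith

lemma gfun_sign {t : ℝ} (ht : 0 < t) :
    (1 ≤ t → 0 ≤ gfun t) ∧ (t ≤ 1 → gfun t ≤ 0) := by
  have h1 : gfun 1 = 0 := by simp [gfun]
  constructor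
  · intro h
    have := gfun_mono (Set.mem_Ioi.2 one_pos) (Set.mem_Ioi.2 ht) h
    linarith
  · intro h
    have := gfun_mono (Set.mem_Ioi.2 ht) (Set.mem_Ioi.2 one_pos) h
    linarith

noncomputable def phifun : ℝ → ℝ :=
  fun t => (2 * t + 4) * (t * Real.log t - t + 1) - 3 * (t - 1) ^ 2

lemma phifun_hasDeriv {t : ℝ} (ht : 0 < t) :
    HasDerivAt phifun (4 * gfun t) t := by
  have hid : HasDerivAt (fun t : ℝ => t) 1 t := hasDerivAt_id t
  have hlog : HasDerivAt Real.log t⁻¹ t := Real.hasDerivAt_log ht.ne'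
  have h1 : HasDerivAt (fun t : ℝ => t * Real.log t - t + 1)
      (1 * Real.log t + t * t⁻¹ - 1) t :=
    ((hid.mul hlog).sub hid).add_const 1
  have h2 : HasDerivAt (fun t : ℝ => 2 * t + 4) 2 t := by
    simpa using (hid.const_mul 2).add_const 4
  have h3 : HasDerivAt (fun t : ℝ => 3 * (t - 1) ^ 2) (3 * (2 * (t - 1))) t := by
    have : HasDerivAt (fun t : ℝ => (t - 1) ^ 2) (2 * (t - 1) ^ 1 * 1) t :=
      ((hid.sub_const 1).pow 2)
    simpa [mul_comm, mul_assoc, mul_left_comm] using this.const_mul 3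
  have h := ((h2.mul h1).sub h3)
  refine h.congr_deriv ?_
  have htt : t * t⁻¹ = 1 := mul_inv_cancel₀ ht.ne'
  simp only [gfun, htt, one_mul]
  ring

lemma phifun_cont : ∀ x ∈ Set.Ioi (0:ℝ), ContinuousAt phifun x := by
  intro x hx
  have hlog : ContinuousAt Real.log x := Real.continuousAt_log (ne_of_gt hx)
  unfold phifun
  fun_prop

lemma phifun_nonneg {t : ℝ} (ht : 0 < t) : 0 ≤ phifun t := by
  have h1 : phifun 1 = 0 := by simp [phifun]
  rcases le_total 1 t with h | h
  · have hmono : MonotoneOn phifun (Set.Ici (1:ℝ)) := by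
      apply monotoneOn_of_deriv_nonneg (convex_Ici 1)
      · intro x hx
        exact (phifun_cont x (Set.mem_Ioi.2 (lt_of_lt_of_le one_pos (Set.mem_Ici.1 hx)))).continuousWithinAt
      · intro x hx
        rw [interior_Ici] at hx
        exact (phifun_hasDeriv (lt_trans one_pos hx)).differentiableAt.differentiableWithinAt
      · intro x hx
        rw [interior_Ici] at hx
        rw [(phifun_hasDeriv (lt_trans one_pos hx)).deriv]
        have := (gfun_sign (lt_trans one_pos hx)).1 hx.le
        linarith
    have := hmono (Set.mem_Ici.2 le_rfl) (Set.mem_Ici.2 h) h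
    linarith
  · have hanti : AntitoneOn phifun (Set.Ioc (0:ℝ) 1) := by
      apply antitoneOn_of_deriv_nonpos (convex_Ioc 0 1)
      · intro x hx
        exact (phifun_cont x hx.1).continuousWithinAt
      · intro x hx
        rw [interior_Ioc] at hx
        exact (phifun_hasDeriv hx.1).differentiableAt.differentiableWithinAt
      · intro x hx
        rw [interior_Ioc] at hx
        rw [(phifun_hasDeriv hx.1).deriv]
        have := (gfun_sign hx.1).2 hx.2.le
        linarith
    have := hanti (Set.mem_Ioc.2 ⟨ht, h⟩) (Set.mem_Ioc.2 ⟨one_pos, le_rfl⟩) h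
    linarith

/-- Pointwise bound: `x log(x/y) - x + y ≥ (x-y)^2 / ((2x+4y)/3)`. -/
lemma pointwise_bound {x y : ℝ} (hx : 0 < x) (hy : 0 < y) :
    (x - y) ^ 2 / ((2 * x + 4 * y) / 3) ≤ x * Real.log (x / y) - x + y := by
  have hw : (0:ℝ) < (2 * x + 4 * y) / 3 := by positivity
  rw [div_le_iff₀ hw]
  set t := x / y with htd
  have ht : 0 < t := div_pos hx hy
  have hx2 : x = t * y := by rw [htd, div_mul_cancel₀ x hy.ne']
  have H := phifun_nonneg ht
  unfold phifun at H
  have hint := mul_nonneg (sq_nonneg y) H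
  rw [hx2]
  nlinarith [hint]

/-- Finite-distribution Pinsker inequality. -/
lemma pinsker_finite {A : Type*} [Fintype A] (P Q : A → ℝ)
    (hP : ∀ a, 0 < P a) (hQ : ∀ a, 0 < Q a)
    (hPs : ∑ a, P a = 1) (hQs : ∑ a, Q a = 1) :
    (1 / 2) * (∑ a, |P a - Q a|) ^ 2 ≤ ∑ a, P a * Real.log (P a / Q a) := by
  set w : A → ℝ := fun a => (2 * P a + 4 * Q a) / 3 with hw
  have hwpos : ∀ a, 0 < w a := fun a => by have := hP a; have := hQ a; positivity
  have hws : ∑ a, w a = 2 := by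
    simp only [hw]
    rw [← Finset.sum_div, Finset.sum_add_distrib, ← Finset.mul_sum, ← Finset.mul_sum,
      hPs, hQs]
    norm_num
  have cs : (∑ a, |P a - Q a|) ^ 2 / (∑ a, w a) ≤ ∑ a, |P a - Q a| ^ 2 / w a :=
    Finset.sq_sum_div_le_sum_sq_div _ _ (fun a _ => hwpos a)
  rw [hws] at cs
  have step2 : ∑ a, |P a - Q a| ^ 2 / w a ≤ ∑ a, P a * Real.log (P a / Q a) := by
    have h : ∑ a, |P a - Q a| ^ 2 / w a
        ≤ ∑ a, (P a * Real.log (P a / Q a) - P a + Q a) := by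
      apply Finset.sum_le_sum
      intro a _
      rw [sq_abs]
      exact pointwise_bound (hP a) (hQ a)
    rw [Finset.sum_add_distrib, Finset.sum_sub_distrib, hPs, hQs] at h
    linarith
  calc (1 / 2) * (∑ a, |P a - Q a|) ^ 2
      = (∑ a, |P a - Q a|) ^ 2 / 2 := by ring
    _ ≤ ∑ a, |P a - Q a| ^ 2 / w a := cs
    _ ≤ _ := step2

/-- Abstract form of Lemma 3 (non-degeneracy of the conditional entropy drop):
(i) if the conditional laws agree, adding C does not change the conditional entropy;
(ii) if for every b there is a value c of conditional probability at least q at which the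
conditional laws differ by at least √ε′ in ℓ₁, the entropy gap is at least (1/2)·q·ε′. -/
theorem stmt_12 {A B C : Type*} [Fintype A] [Fintype B] [Fintype C]
    [Nonempty A] [Nonempty B] [Nonempty C]
    (p : B × C × A → ℝ) (hp : ∀ x, 0 < p x) (hsum : ∑ x, p x = 1) :
    ((∀ a b c, condAgivenBC p b c a = condAgivenB p b a) → HAgivenBC p = HAgivenB p) ∧
      (∀ q ε' : ℝ, 0 < q → 0 < ε' →
        (∀ b, ∃ c, q ≤ condCgivenB p b c ∧
          Real.sqrt ε' ≤ ∑ a, |condAgivenBC p b c a - condAgivenB p b a|) →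
        HAgivenB p - HAgivenBC p ≥ (1 / 2) * q * ε') := by
  classical
  have hpBC : ∀ b c, 0 < pBC p b c := fun b c =>
    Finset.sum_pos (fun a _ => hp _) Finset.univ_nonempty
  have hpB : ∀ b, 0 < pB p b := fun b =>
    Finset.sum_pos (fun c _ => Finset.sum_pos (fun a _ => hp _) Finset.univ_nonempty)
      Finset.univ_nonempty
  have hpBA : ∀ b a, 0 < pBA p b a := fun b a =>
    Finset.sum_pos (fun c _ => hp _) Finset.univ_nonempty
  have hcBC : ∀ b c a, 0 < condAgivenBC p b c a := fun b c a =>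
    div_pos (hp _) (hpBC b c)
  have hcB : ∀ b a, 0 < condAgivenB p b a := fun b a => div_pos (hpBA b a) (hpB b)
  have hsum1 : ∀ b c, ∑ a, condAgivenBC p b c a = 1 := by
    intro b c
    have h : ∑ a, condAgivenBC p b c a = (∑ a, p (b, c, a)) / pBC p b c := by
      rw [Finset.sum_div]; rfl
    rw [h]
    exact div_self (hpBC b c).ne'
  have hsum2 : ∀ b, ∑ a, condAgivenB p b a = 1 := by
    intro b
    have h0 : ∑ a, pBA p b a = pB p b := by
      show (∑ a, ∑ c, p (b, c, a)) = ∑ c, ∑ a, p (b, c, a)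
      exact Finset.sum_comm
    have h : ∑ a, condAgivenB p b a = (∑ a, pBA p b a) / pB p b := by
      rw [Finset.sum_div]; rfl
    rw [h, h0]
    exact div_self (hpB b).ne'
  have hsumB : ∑ b, pB p b = 1 := by
    calc ∑ b, pB p b = ∑ b, ∑ y : C × A, p (b, y) := by
          refine Finset.sum_congr rfl fun b _ => ?_
          show (∑ c, ∑ a, p (b, c, a)) = ∑ y : C × A, p (b, y)
          exact (Fintype.sum_prod_type (fun y : C × A => p (b, y))).symm
      _ = ∑ x : B × C × A, p x := (Fintype.sum_prod_type _).symm
      _ = 1 := hsum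
  constructor
  · intro h
    unfold HAgivenBC HAgivenB
    congr 1
    refine Finset.sum_congr rfl fun b _ => ?_
    rw [Finset.sum_comm]
    refine Finset.sum_congr rfl fun a _ => ?_
    simp_rw [h]
    rw [← Finset.sum_mul]
    rfl
  · intro q ε' hq hε hbc
    have hK : ∀ b c, (1 / 2) * (∑ a, |condAgivenBC p b c a - condAgivenB p b a|) ^ 2 ≤
        ∑ a, condAgivenBC p b c a * Real.log (condAgivenBC p b c a / condAgivenB p b a) :=
      fun b c => pinsker_finite _ _ (hcBC b c) (hcB b) (hsum1 b c) (hsum2 b)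
    have hK0 : ∀ b c, 0 ≤
        ∑ a, condAgivenBC p b c a * Real.log (condAgivenBC p b c a / condAgivenB p b a) :=
      fun b c => le_trans (by positivity) (hK b c)
    have inner : ∀ b c, pBC p b c *
        (∑ a, condAgivenBC p b c a * Real.log (condAgivenBC p b c a / condAgivenB p b a))
        = (∑ a, p (b, c, a) * Real.log (condAgivenBC p b c a))
          - ∑ a, p (b, c, a) * Real.log (condAgivenB p b a) := by
      intro b c
      rw [Finset.mul_sum, ← Finset.sum_sub_distrib]
      refine Finset.sum_congr rfl fun a _ => ?_
      rw [Real.log_div (hcBC b c a).ne' (hcB b a).ne']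
      have hpc : pBC p b c * condAgivenBC p b c a = p (b, c, a) := by
        show pBC p b c * (p (b, c, a) / pBC p b c) = p (b, c, a)
        rw [mul_comm]
        exact div_mul_cancel₀ _ (hpBC b c).ne'
      rw [← mul_assoc, hpc]
      ring
    have key : HAgivenB p - HAgivenBC p = ∑ b, ∑ c, pBC p b c *
        (∑ a, condAgivenBC p b c a * Real.log (condAgivenBC p b c a / condAgivenB p b a)) := by
      have hL : ∀ b, ∑ a, pBA p b a * Real.log (condAgivenB p b a)
          = ∑ c, ∑ a, p (b, c, a) * Real.log (condAgivenB p b a) := by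
        intro b
        rw [Finset.sum_comm]
        refine Finset.sum_congr rfl fun a _ => ?_
        rw [← Finset.sum_mul]
        rfl
      calc HAgivenB p - HAgivenBC p
          = (∑ b, ∑ c, ∑ a, p (b, c, a) * Real.log (condAgivenBC p b c a))
            - ∑ b, ∑ c, ∑ a, p (b, c, a) * Real.log (condAgivenB p b a) := by
            unfold HAgivenB HAgivenBC
            rw [Finset.sum_congr rfl fun b _ => hL b]
            ring
        _ = ∑ b, ∑ c, ((∑ a, p (b, c, a) * Real.log (condAgivenBC p b c a))
            - ∑ a, p (b, c, a) * Real.log (condAgivenB p b a)) := by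
            rw [← Finset.sum_sub_distrib]
            exact Finset.sum_congr rfl fun b _ => (Finset.sum_sub_distrib _ _).symm
        _ = _ := Finset.sum_congr rfl fun b _ =>
            Finset.sum_congr rfl fun c _ => (inner b c).symm
    rw [ge_iff_le, key]
    have hb : ∀ b, pB p b * (q * ((1 / 2) * ε')) ≤ ∑ c, pBC p b c *
        (∑ a, condAgivenBC p b c a * Real.log (condAgivenBC p b c a / condAgivenB p b a)) := by
      intro b
      obtain ⟨c, hcq, hcd⟩ := hbc b
      have h1 : pBC p b c *
          (∑ a, condAgivenBC p b c a * Real.log (condAgivenBC p b c a / condAgivenB p b a))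
          ≤ ∑ c, pBC p b c *
          (∑ a, condAgivenBC p b c a * Real.log (condAgivenBC p b c a / condAgivenB p b a)) :=
        Finset.single_le_sum (fun c _ => mul_nonneg (hpBC b c).le (hK0 b c))
          (Finset.mem_univ c)
      have h2 : q * pB p b ≤ pBC p b c := by
        have hc' : condCgivenB p b c = pBC p b c / pB p b := rfl
        rw [hc', le_div_iff₀ (hpB b)] at hcq
        linarith
      have h3 : (1 / 2) * ε' ≤
          ∑ a, condAgivenBC p b c a * Real.log (condAgivenBC p b c a / condAgivenB p b a) := by
        have h4 : ε' ≤ (∑ a, |condAgivenBC p b c a - condAgivenB p b a|) ^ 2 := by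
          calc ε' = Real.sqrt ε' ^ 2 := (Real.sq_sqrt hε.le).symm
            _ ≤ _ := pow_le_pow_left₀ (Real.sqrt_nonneg _) hcd 2
        have := hK b c
        nlinarith
      calc pB p b * (q * ((1 / 2) * ε')) = (q * pB p b) * ((1 / 2) * ε') := by ring
        _ ≤ pBC p b c *
            (∑ a, condAgivenBC p b c a * Real.log (condAgivenBC p b c a / condAgivenB p b a)) :=
          mul_le_mul h2 h3 (by positivity) (hpBC b c).le
        _ ≤ _ := h1
    calc (1 / 2) * q * ε' = ∑ b, pB p b * (q * ((1 / 2) * ε')) := by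
          rw [← Finset.sum_mul, hsumB]; ring
      _ ≤ _ := Finset.sum_le_sum fun b _ => hb b
end
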